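/- Let U be a unitary on ℂ^{d_A} ⊗ ℂ^{d_B} and U° its index-rotated matrix viewed as a map from a d_A²-dimensional space to a d_B²-dimensional space. Define p_ME := ‖U°‖₁²/(d_A³ d_B). Then p_ME ≤ 1, with equality if and only if U°†U° = (d_B/d_A) I (i.e., U° is proportional to an isometry). -/

import Mathlib

open scoped BigOperators ComplexOrder Matrix

-- Hilbert–Schmidt (Frobenius) norm: `hsNorm A = √(Tr(AᴴA))`.
noncomputable def hsNorm {m n : Type*} [Fintype m] [Fintype n] (A : Matrix m n ℂ) : ℝ :=
  Real.sqrt ((Aᴴ * A).trace).re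

-- Trace (Schatten-1) norm: `traceNorm A = Tr √(AᴴA)`.
noncomputable def traceNorm {m n : Type*} [Fintype m] [Fintype n] [DecidableEq n]
    (A : Matrix m n ℂ) : ℝ :=
  (((Matrix.posSemidef_conjTranspose_mul_self A).1.eigenvectorUnitary.1 *
      Matrix.diagonal ((fun x : ℝ => (x : ℂ)) ∘ (Real.sqrt ·) ∘ (Matrix.posSemidef_conjTranspose_mul_self A).1.eigenvalues) *
      (star (Matrix.posSemidef_conjTranspose_mul_self A).1.eigenvectorUnitary : Matrix n n ℂ)).trace).re

-- The "rotated" matrix `U°` with entries `(U°)^{ij}_{kl} = U^{ki}_{lj}`,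
-- viewed as a `d_B² × d_A²` matrix (rows indexed by `B × B'`, columns by `A × A'`).
def rot {dA dB : ℕ} (U : Matrix (Fin dA × Fin dB) (Fin dA × Fin dB) ℂ) :
    Matrix (Fin dB × Fin dB) (Fin dA × Fin dA) ℂ :=
  Matrix.of fun p q => U (q.1, p.1) (q.2, p.2)

/-- Cauchy–Schwarz for sums, with the equality condition. -/
private lemma sum_sq_ineq {ι : Type*} [Fintype ι] (f : ι → ℝ) :
    (∑ i, f i) ^ 2 ≤ (Fintype.card ι : ℝ) * ∑ i, (f i) ^ 2 ∧
    ((∑ i, f i) ^ 2 = (Fintype.card ι : ℝ) * ∑ i, (f i) ^ 2 → ∀ i j, f i = f j) := by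
  have expand : ∑ i, ∑ j, (f i - f j) ^ 2 =
      2 * ((Fintype.card ι : ℝ) * ∑ i, (f i) ^ 2) - 2 * (∑ i, f i) ^ 2 := by
    have h1 : ∀ i : ι, ∑ j, (f i - f j) ^ 2 =
        (Fintype.card ι : ℝ) * (f i) ^ 2 - 2 * f i * (∑ j, f j) + ∑ j, (f j) ^ 2 := by
      intro i
      simp only [sub_sq]
      rw [Finset.sum_add_distrib, Finset.sum_sub_distrib, Finset.sum_const, Finset.card_univ,
        nsmul_eq_mul, ← Finset.mul_sum, mul_assoc]
    simp only [h1]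
    rw [Finset.sum_add_distrib, Finset.sum_sub_distrib, ← Finset.mul_sum, Finset.sum_const,
      Finset.card_univ, nsmul_eq_mul]
    have h2 : ∑ i, 2 * f i * (∑ j, f j) = 2 * (∑ i, f i) ^ 2 := by
      rw [← Finset.sum_mul, ← Finset.mul_sum]
      ring
    rw [h2]; ring
  have hnn : (0 : ℝ) ≤ ∑ i, ∑ j, (f i - f j) ^ 2 :=
    Finset.sum_nonneg fun i _ => Finset.sum_nonneg fun j _ => sq_nonneg _
  constructor
  · nlinarith [hnn, expand]
  · intro heq i j
    have hz : ∑ i, ∑ j, (f i - f j) ^ 2 = 0 := by rw [expand, heq]; ring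
    have h3 := (Finset.sum_eq_zero_iff_of_nonneg
      (fun i _ => Finset.sum_nonneg fun j _ => sq_nonneg (f i - f j))).mp hz i (Finset.mem_univ i)
    have h4 := (Finset.sum_eq_zero_iff_of_nonneg
      (fun j _ => sq_nonneg (f i - f j))).mp h3 j (Finset.mem_univ j)
    have := sq_eq_zero_iff.mp h4
    linarith

open scoped MatrixOrder

theorem stmt_8 (dA dB : ℕ) (hA : 0 < dA) (hB : 0 < dB)
    (U : Matrix (Fin dA × Fin dB) (Fin dA × Fin dB) ℂ)
    (hU : U ∈ Matrix.unitaryGroup (Fin dA × Fin dB) ℂ) :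
    traceNorm (rot U) ^ 2 / ((dA : ℝ) ^ 3 * dB) ≤ 1 ∧
    (traceNorm (rot U) ^ 2 / ((dA : ℝ) ^ 3 * dB) = 1 ↔
      (rot U)ᴴ * rot U = (((dB : ℂ) / dA) • 1 :
        Matrix (Fin dA × Fin dA) (Fin dA × Fin dA) ℂ)) := by
  classical
  set hM := Matrix.posSemidef_conjTranspose_mul_self (rot U) with hMdef
  set S := CFC.sqrt ((rot U)ᴴ * rot U) with hSdef
  have hS : S.PosSemidef := Matrix.nonneg_iff_posSemidef.mp (CFC.sqrt_nonneg _)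
  have hSS : S * S = (rot U)ᴴ * rot U := CFC.sqrt_mul_sqrt_self _ hM.nonneg
  have hTN0 : traceNorm (rot U) = (S.trace).re := by
    rw [hSdef, CFC.sqrt_eq_cfc, cfc_nnreal_eq_real _ _ hM.nonneg, hM.1.cfc_eq,
      Matrix.IsHermitian.cfc, Unitary.conjStarAlgAut_apply]
    unfold traceNorm
    congr 5
    funext x
    simp only [Function.comp_apply, Real.coe_sqrt, Real.coe_toNNReal']
    rw [max_eq_left (hM.eigenvalues_nonneg x)]
    rfl
  have hHerm : Sᴴ = S := hS.1
  have hSconj : ∀ i j, S j i = (starRingEnd ℂ) (S i j) := by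
    intro i j
    have := congrFun (congrFun hHerm j) i
    rw [Matrix.conjTranspose_apply] at this
    rw [← this, Complex.star_def]
  -- traceNorm is the sum of diagonal entries of S (real parts)
  have hTN : traceNorm (rot U) = ∑ i, (S i i).re := by
    rw [hTN0, Matrix.trace]
    rw [Complex.re_sum]
    rfl
  -- trace of M equals dA * dB
  have htrM : ∑ i, ∑ j, Complex.normSq (S i j) = (dA : ℝ) * dB := by
    have h1 : ((rot U)ᴴ * rot U).trace = ∑ i, ∑ p, (Complex.normSq (rot U p i) : ℂ) := by
      rw [Matrix.trace]
      congr 1; ext i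
      rw [Matrix.diag_apply, Matrix.mul_apply]
      congr 1; ext p
      rw [Matrix.conjTranspose_apply, Complex.star_def, ← Complex.normSq_eq_conj_mul_self]
    have h2 : (Uᴴ * U).trace = ∑ y, ∑ x, (Complex.normSq (U x y) : ℂ) := by
      rw [Matrix.trace]
      congr 1; ext y
      rw [Matrix.diag_apply, Matrix.mul_apply]
      congr 1; ext x
      rw [Matrix.conjTranspose_apply, Complex.star_def, ← Complex.normSq_eq_conj_mul_self]
    have hU1 : Uᴴ * U = 1 := by
      have := hU.1
      rwa [Matrix.star_eq_conjTranspose] at this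
    have hcard : ((Uᴴ * U).trace : ℂ) = ((dA : ℂ) * dB) := by
      rw [hU1, Matrix.trace_one]
      simp [Fintype.card_prod]
    have hreindex : ∑ i : Fin dA × Fin dA, ∑ p : Fin dB × Fin dB,
        (Complex.normSq (rot U p i) : ℂ) = ∑ y, ∑ x, (Complex.normSq (U x y) : ℂ) := by
      rw [← Fintype.sum_prod_type', ← Fintype.sum_prod_type']
      exact Fintype.sum_equiv
        ((Equiv.prodProdProdComm (Fin dA) (Fin dA) (Fin dB) (Fin dB)).trans
          (Equiv.prodComm _ _)) _ _ (fun q => rfl)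
    have htrMC : ((rot U)ᴴ * rot U).trace = ((dA : ℂ) * dB) := by
      rw [h1, hreindex, ← h2, hcard]
    have hSStr : (S * S).trace = ∑ i, ∑ j, (Complex.normSq (S i j) : ℂ) := by
      rw [Matrix.trace]
      congr 1; ext i
      rw [Matrix.diag_apply, Matrix.mul_apply]
      congr 1; ext j
      rw [hSconj i j, Complex.mul_conj]
    have : (∑ i, ∑ j, (Complex.normSq (S i j) : ℂ)) = ((dA : ℂ) * dB) := by
      rw [← hSStr, hSS, htrMC]
    have hre := congrArg Complex.re this
    simpa [Complex.re_sum] using hre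
  have hdiag_im : ∀ i, (S i i).im = 0 := by
    intro i
    have := hSconj i i
    have h := congrArg Complex.im this
    simp [Complex.conj_im] at h
    linarith
  set a : Fin dA × Fin dA → ℝ := fun i => (S i i).re with hadef
  have hdiagsq : ∀ i, (a i) ^ 2 = Complex.normSq (S i i) := by
    intro i
    rw [Complex.normSq_apply, hdiag_im i]
    ring
  have hcardA : (Fintype.card (Fin dA × Fin dA) : ℝ) = (dA : ℝ) * dA := by
    simp [Fintype.card_prod]
  have hstep2 : ∑ i, (a i) ^ 2 ≤ (dA : ℝ) * dB := by
    rw [← htrM]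
    apply Finset.sum_le_sum
    intro i _
    rw [hdiagsq i]
    exact Finset.single_le_sum (fun j _ => Complex.normSq_nonneg _) (Finset.mem_univ i)
  obtain ⟨hCS, hCSeq⟩ := sum_sq_ineq a
  have hpos : (0 : ℝ) < (dA : ℝ) ^ 3 * dB := by positivity
  have hmain : traceNorm (rot U) ^ 2 ≤ (dA : ℝ) ^ 3 * dB := by
    rw [hTN]
    calc (∑ i, a i) ^ 2 ≤ (Fintype.card (Fin dA × Fin dA) : ℝ) * ∑ i, (a i) ^ 2 := hCS
      _ ≤ ((dA : ℝ) * dA) * ((dA : ℝ) * dB) := by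
          rw [hcardA]
          apply mul_le_mul_of_nonneg_left hstep2 (by positivity)
      _ = (dA : ℝ) ^ 3 * dB := by ring
  refine ⟨(div_le_one hpos).mpr hmain, ?_, ?_⟩
  · -- forward: equality implies M = (dB/dA) • 1
    intro heq
    have heq' : traceNorm (rot U) ^ 2 = (dA : ℝ) ^ 3 * dB := by
      field_simp at heq
      linarith
    -- both inequalities must be equalities
    have hc2 : ∑ i, (a i) ^ 2 = (dA : ℝ) * dB := by
      by_contra hne
      have hlt : ∑ i, (a i) ^ 2 < (dA : ℝ) * dB := lt_of_le_of_ne hstep2 hne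
      have : traceNorm (rot U) ^ 2 < (dA : ℝ) ^ 3 * dB := by
        rw [hTN]
        calc (∑ i, a i) ^ 2 ≤ (Fintype.card (Fin dA × Fin dA) : ℝ) * ∑ i, (a i) ^ 2 := hCS
          _ < ((dA : ℝ) * dA) * ((dA : ℝ) * dB) := by
              rw [hcardA]
              apply mul_lt_mul_of_pos_left hlt (by positivity)
          _ = (dA : ℝ) ^ 3 * dB := by ring
      linarith
    have hc1 : (∑ i, a i) ^ 2 = (Fintype.card (Fin dA × Fin dA) : ℝ) * ∑ i, (a i) ^ 2 := by
      rw [hcardA, hc2, ← hTN]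
      rw [heq']; ring
    have halleq := hCSeq hc1
    -- off-diagonal entries of S vanish
    have hoff : ∀ i j, i ≠ j → S i j = 0 := by
      have hsum0 : ∑ i, (∑ j, Complex.normSq (S i j) - Complex.normSq (S i i)) = 0 := by
        rw [Finset.sum_sub_distrib, htrM]
        have : ∑ i, Complex.normSq (S i i) = ∑ i, (a i) ^ 2 := by
          congr 1; ext i; rw [hdiagsq i]
        rw [this, hc2]; ring
      have hterm : ∀ i ∈ Finset.univ, (0:ℝ) ≤ ∑ j, Complex.normSq (S i j) - Complex.normSq (S i i) := by
        intro i _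
        have := Finset.single_le_sum (fun j (_ : j ∈ Finset.univ) => Complex.normSq_nonneg (S i j))
          (Finset.mem_univ i)
        linarith
      intro i j hij
      have h5 := (Finset.sum_eq_zero_iff_of_nonneg hterm).mp hsum0 i (Finset.mem_univ i)
      have h6 : ∑ j ∈ Finset.univ.erase i, Complex.normSq (S i j) = 0 := by
        have := Finset.sum_erase_add Finset.univ (fun j => Complex.normSq (S i j))
          (Finset.mem_univ i)
        linarith
      have h7 := (Finset.sum_eq_zero_iff_of_nonneg
        (fun j _ => Complex.normSq_nonneg (S i j))).mp h6 j
        (Finset.mem_erase.mpr ⟨Ne.symm hij, Finset.mem_univ j⟩)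
      exact Complex.normSq_eq_zero.mp h7
    -- S = c • 1
    have hι : Nonempty (Fin dA × Fin dA) := ⟨(⟨0, hA⟩, ⟨0, hA⟩)⟩
    obtain ⟨i₀⟩ := hι
    set c : ℝ := a i₀ with hcdef
    have hSform : S = (c : ℂ) • (1 : Matrix (Fin dA × Fin dA) (Fin dA × Fin dA) ℂ) := by
      ext i j
      by_cases hij : i = j
      · subst hij
        simp only [Matrix.smul_apply, Matrix.one_apply_eq, smul_eq_mul, mul_one]
        apply Complex.ext
        · simpa [hadef, Complex.ofReal_re] using halleq i i₀
        · simp [hdiag_im i]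
      · rw [hoff i j hij]
        simp [Matrix.one_apply_ne hij]
    have hc2' : (dA:ℝ)*dA * c ^ 2 = (dA : ℝ) * dB := by
      rw [← hc2]
      rw [← hcardA]
      rw [Finset.sum_congr rfl (fun i _ => by rw [halleq i i₀]), Finset.sum_const,
        Finset.card_univ, nsmul_eq_mul]
    have hcsq : c ^ 2 = (dB : ℝ) / dA := by
      have hdA : (dA : ℝ) ≠ 0 := Nat.cast_ne_zero.mpr hA.ne'
      have h := mul_left_cancel₀ hdA
        (show (dA:ℝ) * ((dA:ℝ) * c ^ 2) = (dA:ℝ) * dB by linarith [hc2'])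
      field_simp
      linarith [h]
    rw [← hSS, hSform, smul_mul_smul_comm, one_mul]
    congr 1
    have : ((c : ℂ) * c) = ((c ^ 2 : ℝ) : ℂ) := by push_cast; ring
    rw [this, hcsq]
    push_cast
    ring
  · -- backward
    intro hMeq
    set c : ℝ := Real.sqrt ((dB : ℝ) / dA) with hcdef
    have hnn : (0 : ℝ) ≤ (dB : ℝ) / dA := by positivity
    have hc2 : c * c = (dB : ℝ) / dA := Real.mul_self_sqrt hnn
    have hPSD : ((c : ℂ) • (1 : Matrix (Fin dA × Fin dA) (Fin dA × Fin dA) ℂ)).PosSemidef := by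
      rw [Matrix.smul_one_eq_diagonal]
      exact Matrix.PosSemidef.diagonal
        (fun i => Complex.zero_le_real.mpr (Real.sqrt_nonneg _))
    have hsq : ((c : ℂ) • (1 : Matrix (Fin dA × Fin dA) (Fin dA × Fin dA) ℂ)) ^ 2
        = (rot U)ᴴ * rot U := by
      rw [pow_two, smul_mul_smul_comm, one_mul, hMeq]
      congr 1
      have : ((c : ℂ) * c) = ((c * c : ℝ) : ℂ) := by push_cast; ring
      rw [this, hc2]
      push_cast
      ring
    have heqS : ((c : ℂ) • (1 : Matrix (Fin dA × Fin dA) (Fin dA × Fin dA) ℂ)) = S :=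
      (CFC.sqrt_unique (by rw [← pow_two]; exact hsq) hPSD.nonneg).symm
    have hTNval : traceNorm (rot U) = c * ((dA : ℝ) * dA) := by
      rw [hTN0, ← heqS, Matrix.trace_smul, Matrix.trace_one]
      simp [Fintype.card_prod]
    rw [hTNval]
    have hdA : (dA : ℝ) ≠ 0 := Nat.cast_ne_zero.mpr hA.ne'
    have hdB : (dB : ℝ) ≠ 0 := Nat.cast_ne_zero.mpr hB.ne'
    rw [div_eq_one_iff_eq (by positivity)]
    have hexp : (c * ((dA:ℝ) * dA)) ^ 2 = (c * c) * ((dA:ℝ) * dA * dA * dA) := by ring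
    rw [hexp, hc2]
    field_simp
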